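/- In the filtering step setup, suppose additionally that ∑_{i∈G}(1/n − w_i) < ∑_{i∈B}(1/n − w_i). Define updated weights w' by w'_i = (1 − τ_i/τ_1)·w_i for i ≤ N and w'_i = w_i for i > N. Then ∑_{i∈G}(1/n − w'_i) < ∑_{i∈B}(1/n − w'_i). -/

import Mathlib

open MeasureTheory ProbabilityTheory Matrix Finset Real Filter

noncomputable section

namespace Paper

variable {d n : ℕ}

/-- Spectral (operator) norm of a matrix. -/
def specNorm (A : Matrix (Fin d) (Fin d) ℝ) : ℝ :=
  ‖LinearMap.toContinuousLinearMap (Matrix.toEuclideanLin A)‖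

/-- Frobenius norm of a matrix. -/
def frobNorm (A : Matrix (Fin d) (Fin d) ℝ) : ℝ :=
  Real.sqrt (∑ i, ∑ j, (A i j) ^ 2)

/-- Effective rank. -/
def erk (A : Matrix (Fin d) (Fin d) ℝ) : ℝ := A.trace / specNorm A

open Classical in
/-- Positive semidefinite square root (junk value `0` if not psd). -/
def matSqrt (A : Matrix (Fin d) (Fin d) ℝ) : Matrix (Fin d) (Fin d) ℝ :=
  if h : A.PosSemidef then
    (h.1.eigenvectorUnitary : Matrix (Fin d) (Fin d) ℝ) *
      diagonal (Real.sqrt ∘ h.1.eigenvalues) *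
      (star h.1.eigenvectorUnitary : Matrix (Fin d) (Fin d) ℝ)
  else 0

/-- Inverse of the positive semidefinite square root. -/
def invSqrt (A : Matrix (Fin d) (Fin d) ℝ) : Matrix (Fin d) (Fin d) ℝ := (matSqrt A)⁻¹

/-- Standard Gaussian measure on ℝ^d. -/
def stdGaussian (d : ℕ) : Measure (Fin d → ℝ) :=
  Measure.pi fun _ => gaussianReal 0 1

/-- Centered Gaussian measure with covariance S. -/
def gaussianOf (S : Matrix (Fin d) (Fin d) ℝ) : Measure (Fin d → ℝ) :=
  (stdGaussian d).map (matSqrt S).mulVec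

/-- Spatial sign (projection on the sphere of radius √d). -/
def spSign (d : ℕ) (x : Fin d → ℝ) : Fin d → ℝ :=
  fun i => Real.sqrt d * x i / Real.sqrt (∑ j, (x j) ^ 2)

/-- Truncated spatial sign with threshold Δ. -/
def truncSign (d : ℕ) (Δ : ℝ) (x : Fin d → ℝ) : Fin d → ℝ :=
  if (∑ i, (x i) ^ 2) < (d : ℝ) - Δ then fun i => Real.sqrt ((d : ℝ) / ((d : ℝ) - Δ)) * x i
  else if (d : ℝ) + Δ < (∑ i, (x i) ^ 2) then fun i => Real.sqrt ((d : ℝ) / ((d : ℝ) + Δ)) * x i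
  else spSign d x

/-- Mean vector of a measure on ℝ^d. -/
def meanVec (μ : Measure (Fin d → ℝ)) : Fin d → ℝ := fun i => ∫ x, x i ∂μ

/-- Covariance matrix of a measure on ℝ^d. -/
def covMatrix (μ : Measure (Fin d → ℝ)) : Matrix (Fin d) (Fin d) ℝ :=
  Matrix.of fun i j => ∫ x, (x i - meanVec μ i) * (x j - meanVec μ j) ∂μ

/-- Inner product of vectors indexed by `ι`. -/
def inner1 {ι : Type*} [Fintype ι] (v x : ι → ℝ) : ℝ := ∑ j, v j * x j

/-- Inner product of "matrices" indexed by `ι × ι`. -/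
def innerM {ι : Type*} [Fintype ι] (P Q : ι → ι → ℝ) : ℝ := ∑ j, ∑ k, P j k * Q j k

/-- Outer product. -/
def outer {ι : Type*} (x y : ι → ℝ) : ι → ι → ℝ := fun j k => x j * y k

/-- sup_{v ∈ V} ⟨v, a⟩². -/
def supInner {ι : Type*} [Fintype ι] (V : Set (ι → ℝ)) (a : ι → ℝ) : ℝ :=
  sSup ((fun v => (inner1 v a) ^ 2) '' V)

/-- Generalized stability (Definition 4 of the paper). -/
def IsStable {ι : Type*} [Fintype ι] (x : Fin n → ι → ℝ) (ε δ r : ℝ)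
    (V : Set (ι → ℝ)) (P : Set (ι → ι → ℝ)) (μ : ι → ℝ) (Q : ι → ι → ℝ) : Prop :=
  ∀ v ∈ V, ∀ p ∈ P, ∀ M : Finset (Fin n), (1 - ε) * (n : ℝ) ≤ (M.card : ℝ) →
    |(M.card : ℝ)⁻¹ * ∑ i ∈ M, inner1 v (fun j => x i j - μ j)| ≤ δ ∧
    |(M.card : ℝ)⁻¹ * ∑ i ∈ M, innerM p (outer (fun j => x i j - μ j) (fun j => x i j - μ j))
        - innerM p Q| ≤ δ ^ 2 / ε ∧
    |innerM p Q| ≤ r ^ 2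

/-- 𝒱 ⊗ 𝒱 ⊆ 𝒫. -/
def TensorSub {ι : Type*} (V : Set (ι → ℝ)) (P : Set (ι → ι → ℝ)) : Prop :=
  ∀ v ∈ V, ∀ v' ∈ V, outer v v' ∈ P

/-- Adequacy of 𝒫 with respect to 𝒱. -/
def Adequate {ι : Type*} [Fintype ι] (V : Set (ι → ℝ)) (P : Set (ι → ι → ℝ)) : Prop :=
  (∀ a : ι → ℝ, ∀ p ∈ P, 0 ≤ innerM p (outer a a)) ∧
  (∀ a b : ι → ℝ, ∀ p ∈ P, (innerM p (outer a b)) ^ 2 ≤ supInner V a * supInner V b)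

/-- The weight set 𝒲_ε. -/
def weightSet (n : ℕ) (ε : ℝ) : Set (Fin n → ℝ) :=
  {w | (∀ i, 0 ≤ w i ∧ w i ≤ 1 / (n : ℝ)) ∧ 1 - ε ≤ ∑ i, w i}

/-- Weighted mean μ_w. -/
def wMean {ι : Type*} (w : Fin n → ℝ) (x : Fin n → ι → ℝ) : ι → ℝ :=
  fun j => (∑ i, w i)⁻¹ * ∑ i, w i * x i j

/-- Weighted covariance Σ_w. -/
def wCov {ι : Type*} (w : Fin n → ℝ) (x : Fin n → ι → ℝ) : ι → ι → ℝ :=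
  fun j k => (∑ i, w i)⁻¹ * ∑ i, w i * (x i j - wMean w x j) * (x i k - wMean w x k)

/-- A d×d matrix viewed as a vector in ℝ^{d²}. -/
def mvec (A : Matrix (Fin d) (Fin d) ℝ) : Fin d × Fin d → ℝ := fun p => A p.1 p.2

/-- Id_d as a vector in ℝ^{d²}. -/
def idVec (d : ℕ) : Fin d × Fin d → ℝ := fun p => if p.1 = p.2 then 1 else 0

/-- 2·Id_{d²}. -/
def twoId (d : ℕ) : (Fin d × Fin d) → (Fin d × Fin d) → ℝ :=
  fun p q => if p = q then 2 else 0

/-- The Frobenius-norm ball ℬ_R (as vectors in ℝ^{d²}). -/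
def ballF (d : ℕ) (R : ℝ) : Set (Fin d × Fin d → ℝ) :=
  {V | ∑ p : Fin d × Fin d, (V p) ^ 2 ≤ R ^ 2}

/-- ℬ_R ⊗ ℬ_R. -/
def ballFT (d : ℕ) (R : ℝ) : Set ((Fin d × Fin d) → (Fin d × Fin d) → ℝ) :=
  {P | ∃ V ∈ ballF d R, ∃ W ∈ ballF d R, P = outer V W}

/-- 𝒮_R = {uuᵀ : ‖u‖ ≤ √R}. -/
def sphereSet (d : ℕ) (R : ℝ) : Set (Fin d × Fin d → ℝ) :=
  {V | ∃ u : Fin d → ℝ, (∑ i, (u i) ^ 2) ≤ R ∧ V = fun p => u p.1 * u p.2}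

/-- 𝒫_R: the set of degree-4 pseudo-expectation moment matrices Ẽ[v^{⊗4}]
under the constraint ‖v‖² ≤ R. -/
def pseudoSet (d : ℕ) (R : ℝ) : Set ((Fin d × Fin d) → (Fin d × Fin d) → ℝ) :=
  {P | ∃ L : MvPolynomial (Fin d) ℝ →ₗ[ℝ] ℝ,
    L 1 = 1 ∧
    (∀ q : MvPolynomial (Fin d) ℝ, q.totalDegree ≤ 2 → 0 ≤ L (q ^ 2)) ∧
    (∀ q : MvPolynomial (Fin d) ℝ, q.totalDegree ≤ 1 →
      0 ≤ L ((MvPolynomial.C R - ∑ i, MvPolynomial.X i ^ 2) * q ^ 2)) ∧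
    P = fun p q => L (MvPolynomial.X p.1 * MvPolynomial.X p.2 *
        MvPolynomial.X q.1 * MvPolynomial.X q.2)}

/-- The Hanson–Wright property of a distribution ρ with mean μv and covariance S. -/
def HansonWright (ρ : Measure (Fin d → ℝ)) (μv : Fin d → ℝ)
    (S : Matrix (Fin d) (Fin d) ℝ) (CHW : ℝ) : Prop :=
  ∀ A : Matrix (Fin d) (Fin d) ℝ, ∀ t : ℝ, 0 < t →
    ρ {x | t ≤ |(∑ j, ∑ k, ((invSqrt S).mulVec (fun l => x l - μv l)) j * A j k *
        ((invSqrt S).mulVec (fun l => x l - μv l)) k) - A.trace|}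
      ≤ ENNReal.ofReal (2 * Real.exp (-(1 / CHW) *
          min (t ^ 2 / (frobNorm A) ^ 2) (t / specNorm A)))

/-- ε-corruption of an indexed family of points. -/
def Corruption {α : Type*} (n : ℕ) (ε : ℝ) (x y : Fin n → α) : Prop :=
  ∃ G : Finset (Fin n), (1 - ε) * (n : ℝ) ≤ (G.card : ℝ) ∧ ∀ i ∈ G, x i = y i

/-- Entries of the 4-tensor E[(xxᵀ − Id)^{⊗2}] of a measure μ on ℝ^d. -/
def tensorEnt (μ : Measure (Fin d → ℝ)) (i1 i2 i3 i4 : Fin d) : ℝ :=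
  ∫ x, (x i1 * x i2 - if i1 = i2 then (1 : ℝ) else 0) *
       (x i3 * x i4 - if i3 = i4 then (1 : ℝ) else 0) ∂μ

/-- E[(xxᵀ − Id)^{⊗2}] as a d²×d² matrix. -/
def tensorQ (μ : Measure (Fin d → ℝ)) : (Fin d × Fin d) → (Fin d × Fin d) → ℝ :=
  fun p q => tensorEnt μ p.1 p.2 q.1 q.2



section Aux

variable {ι : Type*} [Fintype ι]

lemma innerM_sub (p A B : ι → ι → ℝ) :
    innerM p (fun j k => A j k - B j k) = innerM p A - innerM p B := by
  simp [innerM, mul_sub, Finset.sum_sub_distrib]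

lemma innerM_outer_sub_left (p : ι → ι → ℝ) (a b c : ι → ℝ) :
    innerM p (outer (fun j => a j - b j) c)
      = innerM p (outer a c) - innerM p (outer b c) := by
  simp [innerM, outer, sub_mul, mul_sub, Finset.sum_sub_distrib]

lemma innerM_outer_sub_right (p : ι → ι → ℝ) (a b c : ι → ℝ) :
    innerM p (outer c (fun j => a j - b j))
      = innerM p (outer c a) - innerM p (outer c b) := by
  simp [innerM, outer, sub_mul, mul_sub, Finset.sum_sub_distrib]

lemma innerM_outer_smul_left (p : ι → ι → ℝ) (t : ℝ) (a c : ι → ℝ) :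
    innerM p (outer (fun j => t * a j) c) = t * innerM p (outer a c) := by
  simp only [innerM, outer, Finset.mul_sum]
  refine Finset.sum_congr rfl fun j _ => Finset.sum_congr rfl fun k _ => by ring

lemma innerM_outer_smul_right (p : ι → ι → ℝ) (t : ℝ) (a c : ι → ℝ) :
    innerM p (outer c (fun j => t * a j)) = t * innerM p (outer c a) := by
  simp only [innerM, outer, Finset.mul_sum]
  refine Finset.sum_congr rfl fun j _ => Finset.sum_congr rfl fun k _ => by ring

lemma innerM_outer_sum_left {n : ℕ} (p : ι → ι → ℝ) (T : Finset (Fin n))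
    (w : Fin n → ℝ) (A : Fin n → ι → ℝ) (c : ι → ℝ) :
    innerM p (outer (fun j => ∑ i ∈ T, w i * A i j) c)
      = ∑ i ∈ T, w i * innerM p (outer (A i) c) := by
  simp only [innerM, outer]
  calc (∑ j, ∑ k, p j k * ((∑ i ∈ T, w i * A i j) * c k))
      = ∑ j, ∑ k, ∑ i ∈ T, w i * (p j k * (A i j * c k)) := by
        refine Finset.sum_congr rfl fun j _ => Finset.sum_congr rfl fun k _ => ?_
        rw [Finset.sum_mul, Finset.mul_sum]
        exact Finset.sum_congr rfl fun i _ => by ring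
    _ = ∑ j, ∑ i ∈ T, ∑ k, w i * (p j k * (A i j * c k)) :=
        Finset.sum_congr rfl fun j _ => Finset.sum_comm
    _ = ∑ i ∈ T, ∑ j, ∑ k, w i * (p j k * (A i j * c k)) := Finset.sum_comm
    _ = ∑ i ∈ T, w i * ∑ j, ∑ k, p j k * (A i j * c k) := by
        refine Finset.sum_congr rfl fun i _ => ?_
        rw [Finset.mul_sum]
        exact Finset.sum_congr rfl fun j _ => by rw [Finset.mul_sum]

lemma innerM_outer_sum_right {n : ℕ} (p : ι → ι → ℝ) (T : Finset (Fin n))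
    (w : Fin n → ℝ) (A : Fin n → ι → ℝ) (c : ι → ℝ) :
    innerM p (outer c (fun j => ∑ i ∈ T, w i * A i j))
      = ∑ i ∈ T, w i * innerM p (outer c (A i)) := by
  simp only [innerM, outer]
  calc (∑ j, ∑ k, p j k * (c j * ∑ i ∈ T, w i * A i k))
      = ∑ j, ∑ k, ∑ i ∈ T, w i * (p j k * (c j * A i k)) := by
        refine Finset.sum_congr rfl fun j _ => Finset.sum_congr rfl fun k _ => ?_
        rw [Finset.mul_sum, Finset.mul_sum]
        exact Finset.sum_congr rfl fun i _ => by ring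
    _ = ∑ j, ∑ i ∈ T, ∑ k, w i * (p j k * (c j * A i k)) :=
        Finset.sum_congr rfl fun j _ => Finset.sum_comm
    _ = ∑ i ∈ T, ∑ j, ∑ k, w i * (p j k * (c j * A i k)) := Finset.sum_comm
    _ = ∑ i ∈ T, w i * ∑ j, ∑ k, p j k * (c j * A i k) := by
        refine Finset.sum_congr rfl fun i _ => ?_
        rw [Finset.mul_sum]
        exact Finset.sum_congr rfl fun j _ => by rw [Finset.mul_sum]

lemma ip_expand_sub (p : ι → ι → ℝ) (a d : ι → ℝ) :
    innerM p (outer (fun j => a j - d j) (fun j => a j - d j))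
      = innerM p (outer a a) - innerM p (outer a d)
        - innerM p (outer d a) + innerM p (outer d d) := by
  rw [innerM_outer_sub_left, innerM_outer_sub_right, innerM_outer_sub_right]
  ring

lemma ip_expand_smul_sub {ι : Type*} [Fintype ι] (p : ι → ι → ℝ) (t : ℝ) (d e : ι → ℝ) :
    innerM p (outer (fun j => t * d j - e j) (fun j => t * d j - e j))
      = t^2 * innerM p (outer d d) - t * innerM p (outer d e)
        - t * innerM p (outer e d) + innerM p (outer e e) := by
  have key : ∀ j k, p j k * ((t*d j - e j)*(t*d k - e k))
      = t^2*(p j k*(d j*d k)) - t*(p j k*(d j*e k)) - t*(p j k*(e j*d k))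
        + p j k*(e j*e k) := fun j k => by ring
  simp only [innerM, outer, key, Finset.sum_add_distrib, Finset.sum_sub_distrib,
    ← Finset.mul_sum]

lemma inner1_sum {n : ℕ} (v : ι → ℝ) (T : Finset (Fin n)) (w : Fin n → ℝ)
    (A : Fin n → ι → ℝ) :
    inner1 v (fun j => ∑ i ∈ T, w i * A i j) = ∑ i ∈ T, w i * inner1 v (A i) := by
  simp only [inner1]
  calc (∑ j, v j * ∑ i ∈ T, w i * A i j)
      = ∑ j, ∑ i ∈ T, w i * (v j * A i j) := by
        refine Finset.sum_congr rfl fun j _ => ?_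
        rw [Finset.mul_sum]
        exact Finset.sum_congr rfl fun i _ => by ring
    _ = ∑ i ∈ T, ∑ j, w i * (v j * A i j) := Finset.sum_comm
    _ = ∑ i ∈ T, w i * ∑ j, v j * A i j := by
        refine Finset.sum_congr rfl fun i _ => ?_
        rw [Finset.mul_sum]

lemma top_select {n : ℕ} (T : Finset (Fin n)) (f : Fin n → ℝ) (k : ℕ) :
    ∃ S ⊆ T, S.card = min k T.card ∧ ∀ j ∈ T \ S, ∀ i ∈ S, f j ≤ f i := by
  induction k with
  | zero => exact ⟨∅, Finset.empty_subset T, by simp, by simp⟩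
  | succ k ih =>
    obtain ⟨S, hST, hcard, htop⟩ := ih
    by_cases hk : T.card ≤ k
    · exact ⟨S, hST, by omega, htop⟩
    · have hlt : k < T.card := by omega
      have hScard : S.card = k := by omega
      have hne : (T \ S).Nonempty := by
        rw [← Finset.card_pos, Finset.card_sdiff_of_subset hST]
        omega
      obtain ⟨i0, hi0, hmax⟩ := Finset.exists_max_image (T \ S) f hne
      refine ⟨insert i0 S, ?_, ?_, ?_⟩
      · exact Finset.insert_subset (Finset.mem_sdiff.1 hi0).1 hST
      · rw [Finset.card_insert_of_notMem (Finset.mem_sdiff.1 hi0).2]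
        omega
      · intro j hj i hi
        have hj' : j ∈ T \ S := by
          rw [Finset.mem_sdiff] at hj ⊢
          exact ⟨hj.1, fun h => hj.2 (Finset.mem_insert_of_mem h)⟩
        rcases Finset.mem_insert.1 hi with rfl | hi
        · exact hmax j hj'
        · exact htop j hj' i hi

lemma knapsack {n : ℕ} (hn : 0 < n) (T : Finset (Fin n)) (c f : Fin n → ℝ) (k : ℕ)
    (hc0 : ∀ i ∈ T, 0 ≤ c i) (hc1 : ∀ i ∈ T, c i ≤ 1 / n)
    (hf : ∀ i ∈ T, 0 ≤ f i) (hsum : ∑ i ∈ T, c i ≤ k / n) :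
    ∃ S ⊆ T, S.card ≤ k ∧ ∑ i ∈ T, c i * f i ≤ (1 / n) * ∑ i ∈ S, f i := by
  have hn' : (0:ℝ) < n := by exact_mod_cast hn
  obtain ⟨S, hST, hcard, htop⟩ := top_select T f k
  by_cases hk : T.card ≤ k
  · have : S = T := Finset.eq_of_subset_of_card_le hST (by omega)
    subst this
    refine ⟨S, hST, by omega, ?_⟩
    rw [Finset.mul_sum]
    refine Finset.sum_le_sum fun i hi => ?_
    exact mul_le_mul_of_nonneg_right (hc1 i hi) (hf i hi)
  · have hlt : k < T.card := by omega
    have hScard : S.card = k := by omega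
    refine ⟨S, hST, by omega, ?_⟩
    rcases Nat.eq_zero_or_pos k with rfl | hkpos
    · have h1 : ∑ j ∈ T, c j ≤ 0 := by simpa using hsum
      have hcz := (Finset.sum_eq_zero_iff_of_nonneg hc0).1
        (le_antisymm h1 (Finset.sum_nonneg hc0))
      have : ∑ i ∈ T, c i * f i = 0 :=
        Finset.sum_eq_zero fun i hi => by rw [hcz i hi, zero_mul]
      rw [this]
      have : S = ∅ := Finset.card_eq_zero.1 (by omega)
      simp [this]
    · have hSne : S.Nonempty := by rw [← Finset.card_pos]; omega
      obtain ⟨i0, hi0S, hmin⟩ := Finset.exists_min_image S f hSne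
      set θ := f i0 with hθ
      have hθ0 : 0 ≤ θ := hf i0 (hST hi0S)
      have hsplit : ∑ i ∈ T, c i * f i
          = ∑ i ∈ S, c i * f i + ∑ i ∈ T \ S, c i * f i := by
        rw [add_comm, Finset.sum_sdiff hST]
      have hsd : ∑ i ∈ T \ S, c i = ∑ i ∈ T, c i - ∑ i ∈ S, c i := by
        have := Finset.sum_sdiff hST (f := c)
        linarith
      have h1 : ∑ i ∈ T \ S, c i * f i ≤ θ * (∑ i ∈ T, c i - ∑ i ∈ S, c i) := by
        rw [← hsd, Finset.mul_sum]
        refine Finset.sum_le_sum fun i hi => ?_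
        have hiT : i ∈ T := (Finset.mem_sdiff.1 hi).1
        have h := htop i hi i0 hi0S
        nlinarith [hc0 i hiT]
      have hkn : (k:ℝ)/n = ∑ _i ∈ S, (1:ℝ)/n := by
        rw [Finset.sum_const, hScard, nsmul_eq_mul]
        ring
      have h2 : θ * (∑ i ∈ T, c i - ∑ i ∈ S, c i) ≤ ∑ i ∈ S, f i * (1/n - c i) := by
        calc θ * (∑ i ∈ T, c i - ∑ i ∈ S, c i) ≤ θ * ((k:ℝ)/n - ∑ i ∈ S, c i) := by
              apply mul_le_mul_of_nonneg_left _ hθ0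
              linarith
          _ = ∑ i ∈ S, θ * (1/n - c i) := by
              rw [hkn, ← Finset.sum_sub_distrib, Finset.mul_sum]
          _ ≤ ∑ i ∈ S, f i * (1/n - c i) := by
              refine Finset.sum_le_sum fun i hi => ?_
              have hci : c i ≤ 1/(n:ℝ) := hc1 i (hST hi)
              have h0 : (0:ℝ) ≤ 1/n - c i := by linarith
              exact mul_le_mul_of_nonneg_right (hmin i hi) h0
      calc ∑ i ∈ T, c i * f i = ∑ i ∈ S, c i * f i + ∑ i ∈ T \ S, c i * f i := hsplit
        _ ≤ ∑ i ∈ S, c i * f i + ∑ i ∈ S, f i * (1/n - c i) := by linarith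
        _ = (1/n) * ∑ i ∈ S, f i := by
            rw [← Finset.sum_add_distrib, Finset.mul_sum]
            refine Finset.sum_congr rfl fun i _ => by ring

lemma weighted_bound {n : ℕ} (hn : 0 < n) (G T : Finset (Fin n)) (hTG : T ⊆ G)
    (c h : Fin n → ℝ) (k : ℕ) (D : ℝ)
    (hc0 : ∀ i ∈ T, 0 ≤ c i) (hc1 : ∀ i ∈ T, c i ≤ 1 / n)
    (hck : ∑ i ∈ T, c i ≤ k / n)
    (hM : ∀ M : Finset (Fin n), M ⊆ G → (G.card : ℝ) - k ≤ (M.card : ℝ) →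
      |∑ i ∈ M, h i| ≤ D) :
    ∑ i ∈ T, c i * h i ≤ 2 * D / n := by
  have hn' : (0:ℝ) < n := by exact_mod_cast hn
  set f : Fin n → ℝ := fun i => max (h i) 0 with hf
  obtain ⟨S, hST, hcard, hkn⟩ := knapsack hn T c f k hc0 hc1
    (fun i _ => le_max_right _ _) hck
  have step1 : ∑ i ∈ T, c i * h i ≤ ∑ i ∈ T, c i * f i := by
    refine Finset.sum_le_sum fun i hi => ?_
    exact mul_le_mul_of_nonneg_left (le_max_left _ _) (hc0 i hi)
  set S' := S.filter (fun i => 0 ≤ h i) with hS'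
  have hfs : ∑ i ∈ S, f i = ∑ i ∈ S', h i := by
    rw [hS', Finset.sum_filter]
    refine Finset.sum_congr rfl fun i _ => ?_
    by_cases hhi : 0 ≤ h i
    · simp [hf, hhi, max_eq_left hhi]
    · push_neg at hhi
      simp [hf, max_eq_right hhi.le, hhi.not_ge]
  have hS'G : S' ⊆ G := (Finset.filter_subset _ _).trans (hST.trans hTG)
  have hS'card : S'.card ≤ k := le_trans (Finset.card_le_card (Finset.filter_subset _ _)) hcard
  have hsd : ∑ i ∈ S', h i = ∑ i ∈ G, h i - ∑ i ∈ G \ S', h i := by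
    have := Finset.sum_sdiff hS'G (f := h)
    linarith
  have hb1 : |∑ i ∈ G, h i| ≤ D := hM G (le_refl G) (by
    have : (0:ℝ) ≤ k := by positivity
    linarith)
  have hb2 : |∑ i ∈ G \ S', h i| ≤ D := by
    refine hM _ (Finset.sdiff_subset) ?_
    rw [Finset.card_sdiff_of_subset hS'G]
    have h1 : S'.card ≤ G.card := Finset.card_le_card hS'G
    have := hS'card
    push_cast
    rw [Nat.cast_sub h1]
    have : (S'.card : ℝ) ≤ k := by exact_mod_cast hS'card
    linarith
  have hfin : ∑ i ∈ S, f i ≤ 2 * D := by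
    rw [hfs, hsd]
    have := abs_le.1 hb1
    have := abs_le.1 hb2
    linarith
  calc ∑ i ∈ T, c i * h i ≤ (1/n) * ∑ i ∈ S, f i := le_trans step1 hkn
    _ ≤ (1/n) * (2 * D) := by
        apply mul_le_mul_of_nonneg_left hfin
        positivity
    _ = 2 * D / n := by ring

end Aux

set_option maxHeartbeats 1000000 in
/-- invariant of the filtering algorithm. -/
theorem filtering_invariant :
    ∃ C c : ℝ, 0 < C ∧ 0 < c ∧
      ∀ (m n : ℕ) (ε δ δ' r : ℝ)
        (V : Set (Fin m → ℝ)) (P : Set (Fin m → Fin m → ℝ))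
        (μ : Fin m → ℝ) (Q : Fin m → Fin m → ℝ)
        (y x : Fin n → Fin m → ℝ) (G : Finset (Fin n))
        (w : Fin n → ℝ) (Pstar : Fin m → Fin m → ℝ)
        (τ : Fin n → ℝ) (N : ℕ) (hn : 0 < n),
        0 < ε → ε < δ → δ < 0.01 → 0 < r →
        TensorSub V P → Adequate V P →
        IsStable y (10 * ε) δ' r V P μ Q →
        (1 - ε) * (n : ℝ) ≤ (G.card : ℝ) → (∀ i ∈ G, x i = y i) →
        w ∈ weightSet n (2 * ε) →
        Pstar ∈ P →
        C * (δ ^ 2 / ε + ε * r ^ 2) <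
          |innerM Pstar (fun j k => Q j k - wCov w x j k)| →
        δ' ≤ c * (δ + ε ^ ((3 : ℝ)/4) *
            |innerM Pstar (fun j k => Q j k - wCov w x j k)| ^ ((1 : ℝ)/4) + ε * r) →
        (∀ i, τ i = innerM Pstar
          (outer (fun j => x i j - wMean w x j) (fun j => x i j - wMean w x j))) →
        (∀ i j : Fin n, i ≤ j → τ j ≤ τ i) →
        0 < N → N ≤ n →
        2 * ε < ∑ i ∈ Finset.univ.filter (fun i : Fin n => (i : ℕ) < N), w i →
        (∀ N' : ℕ, N' < N →
          ∑ i ∈ Finset.univ.filter (fun i : Fin n => (i : ℕ) < N'), w i ≤ 2 * ε) →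
        (∑ i ∈ G, (1 / (n : ℝ) - w i)) < (∑ i ∈ Gᶜ, (1 / (n : ℝ) - w i)) →
        (let w' : Fin n → ℝ := fun i =>
            if (i : ℕ) < N then (1 - τ i / τ ⟨0, hn⟩) * w i else w i
         (∑ i ∈ G, (1 / (n : ℝ) - w' i)) < (∑ i ∈ Gᶜ, (1 / (n : ℝ) - w' i))) := by
  refine ⟨100000000, 1/1000, by norm_num, by norm_num, ?_⟩
  intro m n ε δ δ' r V P μ Q y x G w Pstar τ N hn hε hεδ hδ hr _hTS hAdq hStab
    hGcard hGy hw hPmem hφ hδ'c hτ hsort hN0 hNn hNsum hNmin hInv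
  show (∑ i ∈ G, (1 / (n : ℝ) -
        (if (i : ℕ) < N then (1 - τ i / τ ⟨0, hn⟩) * w i else w i)))
      < ∑ i ∈ Gᶜ, (1 / (n : ℝ) -
        (if (i : ℕ) < N then (1 - τ i / τ ⟨0, hn⟩) * w i else w i))
  -- basic facts
  have hn' : (0:ℝ) < n := by exact_mod_cast hn
  have hδpos : 0 < δ := lt_trans hε hεδ
  have hε01 : ε < 0.01 := lt_trans hεδ hδ
  have hw0 : ∀ i, 0 ≤ w i := fun i => (hw.1 i).1
  have hw1 : ∀ i, w i ≤ 1/(n:ℝ) := fun i => (hw.1 i).2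
  set s : ℝ := ∑ i, w i with hs_def
  have hs_ge : 1 - 2*ε ≤ s := by simpa using hw.2
  have hs_le : s ≤ 1 := by
    have h1 : s ≤ ∑ _i : Fin n, 1/(n:ℝ) := Finset.sum_le_sum fun i _ => hw1 i
    have h2 : ∑ _i : Fin n, 1/(n:ℝ) = 1 := by
      rw [Finset.sum_const, Finset.card_univ, Fintype.card_fin, nsmul_eq_mul]
      field_simp
    linarith only [h1, h2]
  have hs_pos : 0 < s := by linarith only [hs_ge, hε01]
  set φr : ℝ := innerM Pstar (fun j k => Q j k - wCov w x j k) with hφr_def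
  set Φ : ℝ := |φr| with hΦ_def
  have hbase : 0 < δ^2/ε + ε*r^2 := by positivity
  have hΦpos : 0 < Φ := lt_trans (by linarith only [hbase]) hφ
  -- V is nonempty
  have hVne : V.Nonempty := by
    by_contra hV
    rw [Set.not_nonempty_iff_eq_empty] at hV
    have hP0 : ∀ j k, Pstar j k = 0 := by
      intro j k
      have h2 := hAdq.2 (fun j' => if j' = j then (1:ℝ) else 0)
        (fun k' => if k' = k then (1:ℝ) else 0) Pstar hPmem
      rw [hV] at h2
      simp only [supInner, Set.image_empty, Real.sSup_empty, mul_zero] at h2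
      have h3 : innerM Pstar (outer (fun j' => if j' = j then (1:ℝ) else 0)
          (fun k' => if k' = k then (1:ℝ) else 0)) = Pstar j k := by
        simp only [innerM, outer, mul_ite, mul_one, mul_zero, ite_mul, zero_mul]
        rw [Finset.sum_eq_single j]
        · rw [Finset.sum_eq_single k] <;> simp +contextual
        · intro b _ hb
          apply Finset.sum_eq_zero
          intro k' _
          simp [hb]
        · simp
      rw [h3] at h2
      nlinarith [h2, sq_nonneg (Pstar j k)]
    have hz : φr = 0 := by
      rw [hφr_def]
      simp only [innerM]
      exact Finset.sum_eq_zero fun j _ => Finset.sum_eq_zero fun k _ => by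
        rw [hP0 j k]; ring
    rw [hΦ_def, hz, abs_zero] at hΦpos
    exact lt_irrefl 0 hΦpos
  obtain ⟨v0, hv0⟩ := hVne
  -- sizes of G and B
  have hGn : (G.card:ℝ) ≤ n := by
    have h := Finset.card_le_univ G
    rw [Fintype.card_fin] at h
    exact_mod_cast h
  have hBcard : (Gᶜ.card : ℝ) = n - G.card := by
    have h := Finset.card_le_univ G
    rw [Fintype.card_fin] at h
    rw [Finset.card_compl, Fintype.card_fin]
    push_cast [Nat.cast_sub h]
    ring
  have hBle : (Gᶜ.card : ℝ) ≤ ε * n := by rw [hBcard]; linarith only [hGcard]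
  have hsplitGB : ∀ F : Fin n → ℝ, ∑ i ∈ G, F i + ∑ i ∈ Gᶜ, F i = ∑ i, F i :=
    fun F => Finset.sum_add_sum_compl G F
  have hunit : ∑ _i : Fin n, 1/(n:ℝ) = 1 := by
    rw [Finset.sum_const, Finset.card_univ, Fintype.card_fin, nsmul_eq_mul]
    field_simp
  have hdGdB : ∑ i ∈ G, (1/(n:ℝ) - w i) + ∑ i ∈ Gᶜ, (1/(n:ℝ) - w i) = 1 - s := by
    rw [hsplitGB]
    rw [Finset.sum_sub_distrib, hunit, hs_def]
  have hdG0 : 0 ≤ ∑ i ∈ G, (1/(n:ℝ) - w i) :=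
    Finset.sum_nonneg fun i _ => by have h := hw1 i; linarith only [h]
  have hdG : ∑ i ∈ G, (1/(n:ℝ) - w i) < ε := by linarith only [hInv, hdGdB, hs_ge, hdG0]
  have hBne : Gᶜ.Nonempty := by
    rcases Finset.eq_empty_or_nonempty Gᶜ with h | h
    · rw [h, Finset.sum_empty] at hInv
      linarith only [hdG0, hInv]
    · exact h
  have hεn : 1 ≤ ε * n := by
    have h1 : (1:ℝ) ≤ Gᶜ.card := by exact_mod_cast Finset.card_pos.2 hBne
    linarith only [h1, hBle]
  have h1n : 1/(n:ℝ) ≤ ε := by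
    rw [div_le_iff₀ hn']
    linarith only [hεn]
  -- τ basics
  set τ0 : ℝ := τ ⟨0, hn⟩ with hτ0_def
  have hτnn : ∀ i, 0 ≤ τ i := fun i => by rw [hτ i]; exact hAdq.1 _ Pstar hPmem
  have hτ0max : ∀ i, τ i ≤ τ0 := fun i => hsort ⟨0, hn⟩ i (by simp [Fin.le_def])
  have hεn2 : ε*(n:ℝ) < 0.01*n := mul_lt_mul_of_pos_right hε01 hn'
  by_cases hτ0pos : 0 < τ0
  swap
  · -- all scores vanish, nothing changes
    push_neg at hτ0pos
    have hτz : ∀ i, τ i = 0 := fun i => le_antisymm (le_trans (hτ0max i) hτ0pos) (hτnn i)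
    have hch : ∀ i : Fin n,
        (if (i : ℕ) < N then (1 - τ i / τ0) * w i else w i) = w i := by
      intro i
      rw [hτz i]
      simp
    simp only [hch]
    exact hInv
  -- stability consequences
  have hcard_univ : (1 - 10*ε) * n ≤ ((Finset.univ : Finset (Fin n)).card : ℝ) := by
    rw [Finset.card_univ, Fintype.card_fin]
    linarith only [hεn]
  have hδ'0 : 0 ≤ δ' :=
    le_trans (abs_nonneg _) ((hStab v0 hv0 Pstar hPmem Finset.univ hcard_univ).1)
  set Qh : ℝ := innerM Pstar Q with hQh_def
  have hQhat : |Qh| ≤ r^2 := (hStab v0 hv0 Pstar hPmem Finset.univ hcard_univ).2.2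
  set Δ2 : ℝ := δ'^2/(10*ε) with hΔ2_def
  have hΔ2nn : 0 ≤ Δ2 := by positivity
  set f : Fin n → ℝ := fun i =>
    innerM Pstar (outer (fun j => y i j - μ j) (fun j => y i j - μ j)) with hf_def
  have hf0 : ∀ i, 0 ≤ f i := fun i => hAdq.1 _ Pstar hPmem
  have hcard_pos : ∀ M : Finset (Fin n), (1 - 10*ε) * n ≤ (M.card:ℝ) → (0:ℝ) < M.card := by
    intro M hM
    linarith only [hM, hεn2, hn']
  have hcard_len : ∀ M : Finset (Fin n), (M.card:ℝ) ≤ n := by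
    intro M
    have h := Finset.card_le_univ M
    rw [Fintype.card_fin] at h
    exact_mod_cast h
  have hfM : ∀ M : Finset (Fin n), (1 - 10*ε) * n ≤ (M.card:ℝ) →
      |∑ i ∈ M, (f i - Qh)| ≤ n * Δ2 := by
    intro M hM
    have h := (hStab v0 hv0 Pstar hPmem M hM).2.1
    have hMpos := hcard_pos M hM
    have key : ∑ i ∈ M, (f i - Qh) = (M.card:ℝ) * ((M.card:ℝ)⁻¹ * (∑ i ∈ M, f i) - Qh) := by
      rw [Finset.sum_sub_distrib, Finset.sum_const, nsmul_eq_mul]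
      field_simp
    rw [key, abs_mul, abs_of_pos hMpos]
    have h1 := hcard_len M
    have h2 := abs_nonneg ((M.card:ℝ)⁻¹ * (∑ i ∈ M, f i) - Qh)
    calc (M.card:ℝ) * |(M.card:ℝ)⁻¹ * (∑ i ∈ M, f i) - Qh|
        ≤ (M.card:ℝ) * Δ2 := by
          apply mul_le_mul_of_nonneg_left _ (le_of_lt hMpos)
          exact h
      _ ≤ n * Δ2 := mul_le_mul_of_nonneg_right h1 hΔ2nn
  have hhM : ∀ v ∈ V, ∀ M : Finset (Fin n), (1 - 10*ε) * n ≤ (M.card:ℝ) →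
      |∑ i ∈ M, inner1 v (fun j => y i j - μ j)| ≤ n * δ' := by
    intro v hv M hM
    have h := (hStab v hv Pstar hPmem M hM).1
    have hMpos := hcard_pos M hM
    have key : ∑ i ∈ M, inner1 v (fun j => y i j - μ j)
        = (M.card:ℝ) * ((M.card:ℝ)⁻¹ * ∑ i ∈ M, inner1 v (fun j => y i j - μ j)) := by
      field_simp
    rw [key, abs_mul, abs_of_pos hMpos]
    have h1 := hcard_len M
    have h2 := abs_nonneg ((M.card:ℝ)⁻¹ * ∑ i ∈ M, inner1 v (fun j => y i j - μ j))
    calc (M.card:ℝ) * |(M.card:ℝ)⁻¹ * ∑ i ∈ M, inner1 v (fun j => y i j - μ j)|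
        ≤ (M.card:ℝ) * δ' := by
          apply mul_le_mul_of_nonneg_left _ (le_of_lt hMpos)
          exact h
      _ ≤ n * δ' := mul_le_mul_of_nonneg_right h1 hδ'0
  -- abs version of weighted_bound
  have habs_wb : ∀ (T : Finset (Fin n)) (c : Fin n → ℝ) (k : ℕ) (h : Fin n → ℝ) (D : ℝ),
      T ⊆ G → (∀ i ∈ T, 0 ≤ c i) → (∀ i ∈ T, c i ≤ 1/(n:ℝ)) →
      (∑ i ∈ T, c i ≤ k/(n:ℝ)) →
      (∀ M : Finset (Fin n), M ⊆ G → (G.card:ℝ) - k ≤ (M.card:ℝ) → |∑ i ∈ M, h i| ≤ D) →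
      |∑ i ∈ T, c i * h i| ≤ 2*D/(n:ℝ) := by
    intro T c k h D hTG hc0 hc1 hck hM
    have h1 := weighted_bound hn G T hTG c h k D hc0 hc1 hck hM
    have h2 := weighted_bound hn G T hTG c (fun i => -h i) k D hc0 hc1 hck
      (fun M hMG hMc => by
        rw [Finset.sum_neg_distrib, abs_neg]
        exact hM M hMG hMc)
    have h3 : ∑ i ∈ T, c i * (-h i) = -∑ i ∈ T, c i * h i := by
      rw [← Finset.sum_neg_distrib]
      exact Finset.sum_congr rfl fun i _ => by ring
    rw [h3] at h2
    rw [abs_le]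
    constructor <;> linarith
  -- the two filter budgets
  set k1 : ℕ := Nat.floor (ε*n) + 1 with hk1_def
  set k3 : ℕ := Nat.floor (3*ε*n) + 1 with hk3_def
  have hk1a : (k1:ℝ) ≤ 2*ε*n := by
    have h1 : (Nat.floor (ε*n) : ℝ) ≤ ε*n := Nat.floor_le (by positivity)
    rw [hk1_def]
    push_cast
    linarith only [h1, hεn]
  have hk1b : ε ≤ (k1:ℝ)/n := by
    have h1 : ε*n < Nat.floor (ε*n) + 1 := Nat.lt_floor_add_one _
    rw [le_div_iff₀ hn', hk1_def]
    push_cast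
    linarith only [h1]
  have hk3a : (k3:ℝ) ≤ 4*ε*n := by
    have h1 : (Nat.floor (3*ε*n) : ℝ) ≤ 3*ε*n := Nat.floor_le (by positivity)
    rw [hk3_def]
    push_cast
    linarith only [h1, hεn]
  have hk3b : 3*ε ≤ (k3:ℝ)/n := by
    have h1 : 3*ε*n < Nat.floor (3*ε*n) + 1 := Nat.lt_floor_add_one _
    rw [le_div_iff₀ hn', hk3_def]
    push_cast
    linarith only [h1]
  have hMcond1 : ∀ M : Finset (Fin n), M ⊆ G → (G.card:ℝ) - k1 ≤ (M.card:ℝ) →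
      (1 - 10*ε) * n ≤ (M.card:ℝ) := by
    intro M _ h
    linarith only [hGcard, hk1a, h, hεn]
  have hMcond3 : ∀ M : Finset (Fin n), M ⊆ G → (G.card:ℝ) - k3 ≤ (M.card:ℝ) →
      (1 - 10*ε) * n ≤ (M.card:ℝ) := by
    intro M _ h
    linarith only [hGcard, hk3a, h, hεn]
  have hGcond : (1 - 10*ε) * n ≤ (G.card:ℝ) := by linarith only [hGcard, hεn]
  -- good direction vectors
  set Δv : Fin m → ℝ := fun j => wMean w x j - μ j with hΔv_def
  set u : Fin m → ℝ := fun j => ∑ i ∈ G, w i * (y i j - μ j) with hu_def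
  set q2 : ℝ := innerM Pstar (outer Δv Δv) with hq2_def
  have hq2nn : 0 ≤ q2 := hAdq.1 _ Pstar hPmem
  have h1npos : (0:ℝ) < 1/n := by positivity
  -- generic: pointwise inner-product bounds give a bound on the quadratic form
  have hip_sup : ∀ (z : Fin m → ℝ) (D : ℝ), 0 ≤ D → (∀ v ∈ V, |inner1 v z| ≤ D) →
      innerM Pstar (outer z z) ≤ D^2 := by
    intro z D hD hvz
    have hvz2 : ∀ q ∈ (fun v => (inner1 v z)^2) '' V, q ≤ D^2 := by
      rintro q ⟨v, hv, rfl⟩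
      have h := abs_le.1 (hvz v hv)
      exact sq_le_sq' (by linarith only [h.1]) h.2
    have hsup_le : supInner V z ≤ D^2 :=
      Real.sSup_le (fun q hq => hvz2 q hq) (by positivity)
    have hbdd : BddAbove ((fun v => (inner1 v z)^2) '' V) := ⟨D^2, fun q hq => hvz2 q hq⟩
    have hsup0 : 0 ≤ supInner V z :=
      le_trans (sq_nonneg (inner1 v0 z)) (le_csSup hbdd ⟨v0, hv0, rfl⟩)
    have hadq2 := hAdq.2 z z Pstar hPmem
    have hzz0 : 0 ≤ innerM Pstar (outer z z) := hAdq.1 _ Pstar hPmem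
    by_contra hcon
    push_neg at hcon
    have hxS : supInner V z < innerM Pstar (outer z z) := lt_of_le_of_lt hsup_le hcon
    have hprod : supInner V z * supInner V z
        < innerM Pstar (outer z z) * innerM Pstar (outer z z) :=
      mul_lt_mul'' hxS hxS hsup0 hsup0
    linarith only [hadq2, hprod]
  -- bound on u
  have hcG0 : ∀ i ∈ G, 0 ≤ 1/(n:ℝ) - w i := fun i _ => by have h := hw1 i; linarith only [h]
  have hcG1 : ∀ i ∈ G, 1/(n:ℝ) - w i ≤ 1/(n:ℝ) := fun i _ => by have h := hw0 i; linarith only [h]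
  have hcGsum : ∑ i ∈ G, (1/(n:ℝ) - w i) ≤ (k1:ℝ)/n := le_trans (le_of_lt hdG) hk1b
  have hvu : ∀ v ∈ V, |inner1 v u| ≤ 3*δ' := by
    intro v hv
    have hsplit : inner1 v u
        = (1/(n:ℝ)) * (∑ i ∈ G, inner1 v (fun j => y i j - μ j))
          - ∑ i ∈ G, (1/(n:ℝ) - w i) * inner1 v (fun j => y i j - μ j) := by
      rw [hu_def, inner1_sum, Finset.mul_sum, ← Finset.sum_sub_distrib]
      exact Finset.sum_congr rfl fun i _ => by ring
    have h1 := hhM v hv G hGcond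
    have h2 := habs_wb G (fun i => 1/(n:ℝ) - w i) k1
      (fun i => inner1 v (fun j => y i j - μ j)) ((n:ℝ)*δ') (le_refl G) hcG0 hcG1 hcGsum
      (fun M hMG hMc => hhM v hv M (hMcond1 M hMG hMc))
    have h3 : 2*((n:ℝ)*δ')/n = 2*δ' := by field_simp
    rw [h3] at h2
    have h6 : |(1/(n:ℝ)) * (∑ i ∈ G, inner1 v (fun j => y i j - μ j))| ≤ δ' := by
      rw [abs_mul, abs_of_pos h1npos]
      calc (1/(n:ℝ)) * |∑ i ∈ G, inner1 v (fun j => y i j - μ j)|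
          ≤ (1/(n:ℝ)) * ((n:ℝ)*δ') := mul_le_mul_of_nonneg_left h1 (le_of_lt h1npos)
        _ = δ' := by field_simp
    have h4 := abs_le.1 h6
    have h5 := abs_le.1 h2
    rw [hsplit, abs_le]
    constructor <;> linarith only [h4.1, h4.2, h5.1, h5.2]
  have hu2 : innerM Pstar (outer u u) ≤ 9*δ'^2 := by
    have h := hip_sup u (3*δ') (by linarith only [hδ'0]) hvu
    linarith only [h]
  -- the top-N index sets
  set TopG : Finset (Fin n) := G.filter (fun i => (i:ℕ) < N) with hTopG_def
  set TopB : Finset (Fin n) := Gᶜ.filter (fun i => (i:ℕ) < N) with hTopB_def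
  set mv : Fin m → ℝ := fun j => ∑ i ∈ TopG, w i * (y i j - μ j) with hmv_def
  set tG : ℝ := ∑ i ∈ TopG, w i with htG_def
  have hNf : N - 1 < n := by omega
  set Nf : Fin n := ⟨N-1, hNf⟩ with hNf_def
  have hTopsum : ∑ i ∈ Finset.univ.filter (fun i : Fin n => (i:ℕ) < N), w i
      ≤ 2*ε + 1/(n:ℝ) := by
    have hins : Finset.univ.filter (fun i : Fin n => (i:ℕ) < N)
        = insert Nf (Finset.univ.filter (fun i : Fin n => (i:ℕ) < N - 1)) := by
      ext i
      simp only [Finset.mem_filter, Finset.mem_univ, true_and, Finset.mem_insert,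
        Fin.ext_iff, hNf_def]
      omega
    rw [hins, Finset.sum_insert (by simp [hNf_def])]
    have h1 := hNmin (N-1) (by omega)
    have h2 := hw1 Nf
    linarith only [h1, h2]
  have htG3 : tG ≤ 3*ε := by
    have h1 : tG ≤ ∑ i ∈ Finset.univ.filter (fun i : Fin n => (i:ℕ) < N), w i := by
      rw [htG_def, hTopG_def]
      exact Finset.sum_le_sum_of_subset_of_nonneg
        (Finset.filter_subset_filter _ (Finset.subset_univ G)) (fun i _ _ => hw0 i)
    linarith only [h1, hTopsum, h1n]
  have htGk : tG ≤ (k3:ℝ)/n := le_trans htG3 hk3b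
  have htG0 : 0 ≤ tG := Finset.sum_nonneg fun i _ => hw0 i
  have hvm : ∀ v ∈ V, |inner1 v mv| ≤ 2*δ' := by
    intro v hv
    have hsplit : inner1 v mv = ∑ i ∈ TopG, w i * inner1 v (fun j => y i j - μ j) := by
      rw [hmv_def, inner1_sum]
    have h2 := habs_wb TopG w k3 (fun i => inner1 v (fun j => y i j - μ j)) ((n:ℝ)*δ')
      (Finset.filter_subset _ _) (fun i _ => hw0 i) (fun i _ => hw1 i) htGk
      (fun M hMG hMc => hhM v hv M (hMcond3 M hMG hMc))
    have h3 : 2*((n:ℝ)*δ')/n = 2*δ' := by field_simp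
    rw [h3] at h2
    rw [hsplit]
    exact h2
  have hm2 : innerM Pstar (outer mv mv) ≤ 4*δ'^2 := by
    have h := hip_sup mv (2*δ') (by linarith only [hδ'0]) hvm
    linarith only [h]
  -- cross terms
  set Xu : ℝ := innerM Pstar (outer u Δv) + innerM Pstar (outer Δv u) with hXu_def
  set Xm : ℝ := innerM Pstar (outer mv Δv) + innerM Pstar (outer Δv mv) with hXm_def
  clear_value Xu Xm
  have hipu0 : 0 ≤ innerM Pstar (outer u u) := hAdq.1 _ Pstar hPmem
  have hipm0 : 0 ≤ innerM Pstar (outer mv mv) := hAdq.1 _ Pstar hPmem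
  have hXu_gen : ∀ t : ℝ, t * Xu ≤ t^2 * innerM Pstar (outer u u) + q2 := by
    intro t
    have h0 := hAdq.1 (fun j => t * u j - Δv j) Pstar hPmem
    rw [ip_expand_smul_sub Pstar t u Δv] at h0
    rw [hXu_def, hq2_def]
    linarith only [h0]
  have hXm_gen : ∀ t : ℝ, t * Xm ≤ t^2 * innerM Pstar (outer mv mv) + q2 := by
    intro t
    have h0 := hAdq.1 (fun j => t * mv j - Δv j) Pstar hPmem
    rw [ip_expand_smul_sub Pstar t mv Δv] at h0
    rw [hXm_def, hq2_def]
    linarith only [h0]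
  have hXu_le : Xu ≤ 30*δ'^2 + 0.3*q2 := by
    have h := hXu_gen (10/3)
    linarith only [h, hu2]
  have hXu_ge : -(30*δ'^2 + 0.3*q2) ≤ Xu := by
    have h := hXu_gen (-(10/3))
    linarith only [h, hu2]
  have hXm_le : Xm ≤ 16*δ'^2 + (1/4)*q2 := by
    have h := hXm_gen 4
    have h2 : (16:ℝ) * innerM Pstar (outer mv mv) ≤ 16*(4*δ'^2) :=
      mul_le_mul_of_nonneg_left hm2 (by norm_num)
    linarith only [h, h2]
  have hXm_ge : -(16*δ'^2 + (1/4)*q2) ≤ Xm := by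
    have h := hXm_gen (-4)
    have h2 : (16:ℝ) * innerM Pstar (outer mv mv) ≤ 16*(4*δ'^2) :=
      mul_le_mul_of_nonneg_left hm2 (by norm_num)
    linarith only [h, h2]
  -- aggregated quantities
  set AG : ℝ := ∑ i ∈ G, w i * f i with hAG_def
  set gtot : ℝ := ∑ i ∈ G, w i * τ i with hgtot_def
  set btot : ℝ := ∑ i ∈ Gᶜ, w i * τ i with hbtot_def
  set sG : ℝ := ∑ i ∈ G, w i with hsG_def
  set sB : ℝ := ∑ i ∈ Gᶜ, w i with hsB_def
  set goodin : ℝ := ∑ i ∈ TopG, w i * τ i with hgoodin_def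
  set badin : ℝ := ∑ i ∈ TopB, w i * τ i with hbadin_def
  have hsGsB : sG + sB = s := by
    rw [hsG_def, hsB_def, hs_def]
    exact hsplitGB w
  have hsB0 : 0 ≤ sB := Finset.sum_nonneg fun i _ => hw0 i
  have hsG0 : 0 ≤ sG := Finset.sum_nonneg fun i _ => hw0 i
  have hsBε : sB ≤ ε := by
    have h1 : sB ≤ ∑ _i ∈ Gᶜ, 1/(n:ℝ) := Finset.sum_le_sum fun i _ => hw1 i
    rw [Finset.sum_const, nsmul_eq_mul] at h1
    calc sB ≤ (Gᶜ.card:ℝ) * (1/(n:ℝ)) := h1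
      _ ≤ (ε*n) * (1/(n:ℝ)) := mul_le_mul_of_nonneg_right hBle (le_of_lt h1npos)
      _ = ε := by field_simp
  have hsG1 : sG ≤ 1 := by linarith only [hsGsB, hsB0, hs_le]
  have hsG97 : 0.97 ≤ sG := by linarith only [hsGsB, hsBε, hs_ge, hε01]
  have hbtot0 : 0 ≤ btot := Finset.sum_nonneg fun i _ => mul_nonneg (hw0 i) (hτnn i)
  have hgoodin0 : 0 ≤ goodin := Finset.sum_nonneg fun i _ => mul_nonneg (hw0 i) (hτnn i)
  have hbadin0 : 0 ≤ badin := Finset.sum_nonneg fun i _ => mul_nonneg (hw0 i) (hτnn i)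
  -- expansion of τ for uncorrupted points
  have hτG : ∀ i ∈ G, τ i = f i - innerM Pstar (outer (fun j => y i j - μ j) Δv)
      - innerM Pstar (outer Δv (fun j => y i j - μ j)) + q2 := by
    intro i hi
    rw [hτ i]
    have hfun : (fun j => x i j - wMean w x j) = (fun j => (y i j - μ j) - Δv j) := by
      funext j
      rw [hGy i hi]
      simp only [hΔv_def]
      ring
    rw [hfun, ip_expand_sub Pstar (fun j => y i j - μ j) Δv]
  have hLu : innerM Pstar (outer u Δv)
      = ∑ i ∈ G, w i * innerM Pstar (outer (fun j => y i j - μ j) Δv) := by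
    rw [hu_def]
    exact innerM_outer_sum_left Pstar G w (fun i => fun j => y i j - μ j) Δv
  have hRu : innerM Pstar (outer Δv u)
      = ∑ i ∈ G, w i * innerM Pstar (outer Δv (fun j => y i j - μ j)) := by
    rw [hu_def]
    exact innerM_outer_sum_right Pstar G w (fun i => fun j => y i j - μ j) Δv
  have hLm : innerM Pstar (outer mv Δv)
      = ∑ i ∈ TopG, w i * innerM Pstar (outer (fun j => y i j - μ j) Δv) := by
    rw [hmv_def]
    exact innerM_outer_sum_left Pstar TopG w (fun i => fun j => y i j - μ j) Δv
  have hRm : innerM Pstar (outer Δv mv)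
      = ∑ i ∈ TopG, w i * innerM Pstar (outer Δv (fun j => y i j - μ j)) := by
    rw [hmv_def]
    exact innerM_outer_sum_right Pstar TopG w (fun i => fun j => y i j - μ j) Δv
  have hEG : gtot = AG - Xu + sG * q2 := by
    have h1 : ∀ i ∈ G, w i * τ i
        = w i * f i - w i * innerM Pstar (outer (fun j => y i j - μ j) Δv)
          - w i * innerM Pstar (outer Δv (fun j => y i j - μ j)) + w i * q2 := by
      intro i hi
      rw [hτG i hi]
      ring
    rw [hgtot_def, Finset.sum_congr rfl h1, Finset.sum_add_distrib,
      Finset.sum_sub_distrib, Finset.sum_sub_distrib, ← Finset.sum_mul,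
      ← hAG_def, ← hsG_def, hXu_def, hLu, hRu]
    all_goals ring
  have hET : goodin = (∑ i ∈ TopG, w i * f i) - Xm + tG * q2 := by
    have h1 : ∀ i ∈ TopG, w i * τ i
        = w i * f i - w i * innerM Pstar (outer (fun j => y i j - μ j) Δv)
          - w i * innerM Pstar (outer Δv (fun j => y i j - μ j)) + w i * q2 := by
      intro i hi
      rw [hτG i (Finset.mem_of_mem_filter i hi)]
      ring
    rw [hgoodin_def, Finset.sum_congr rfl h1, Finset.sum_add_distrib,
      Finset.sum_sub_distrib, Finset.sum_sub_distrib, ← Finset.sum_mul,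
      ← htG_def, hXm_def, hLm, hRm]
    all_goals ring
  -- total weighted score mass
  have hcov : innerM Pstar (wCov w x) = s⁻¹ * ∑ i, w i * τ i := by
    have hτ' : ∀ i : Fin n, τ i
        = ∑ j, ∑ k, Pstar j k * ((x i j - wMean w x j) * (x i k - wMean w x k)) := by
      intro i
      rw [hτ i]
      simp only [innerM, outer]
    simp only [wCov, innerM]
    rw [← hs_def]
    calc ∑ j, ∑ k, Pstar j k *
          (s⁻¹ * ∑ i, w i * (x i j - wMean w x j) * (x i k - wMean w x k))
        = ∑ j, ∑ k, ∑ i, s⁻¹ * (w i * (Pstar j k *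
            ((x i j - wMean w x j) * (x i k - wMean w x k)))) := by
          refine Finset.sum_congr rfl fun j _ => Finset.sum_congr rfl fun k _ => ?_
          rw [Finset.mul_sum, Finset.mul_sum]
          exact Finset.sum_congr rfl fun i _ => by ring
      _ = ∑ j, ∑ i, ∑ k, s⁻¹ * (w i * (Pstar j k *
            ((x i j - wMean w x j) * (x i k - wMean w x k)))) :=
          Finset.sum_congr rfl fun j _ => Finset.sum_comm
      _ = ∑ i, ∑ j, ∑ k, s⁻¹ * (w i * (Pstar j k *
            ((x i j - wMean w x j) * (x i k - wMean w x k)))) := Finset.sum_comm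
      _ = s⁻¹ * ∑ i, w i * τ i := by
          rw [Finset.mul_sum]
          refine Finset.sum_congr rfl fun i _ => ?_
          simp only [hτ' i, Finset.mul_sum]
          all_goals exact Finset.sum_congr rfl fun j _ =>
            Finset.sum_congr rfl fun k _ => by ring
  have htot : gtot + btot = s * (Qh - φr) := by
    have hφr2 : φr = Qh - innerM Pstar (wCov w x) := by
      rw [hφr_def, hQh_def]
      exact innerM_sub Pstar Q (wCov w x)
    rw [hcov] at hφr2
    have hsplit := hsplitGB (fun i => w i * τ i)
    have hT : ∑ i, w i * τ i = s * (Qh - φr) := by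
      rw [hφr2]
      have hsne : s ≠ 0 := ne_of_gt hs_pos
      field_simp
      ring
    rw [hgtot_def, hbtot_def, hsplit, hT]
  -- the bad-points vector
  have hz0 : ∀ j, ∑ i, w i * (x i j - wMean w x j) = 0 := by
    intro j
    have h1 : ∑ i, w i * (x i j - wMean w x j)
        = (∑ i, w i * x i j) - s * wMean w x j := by
      calc ∑ i, w i * (x i j - wMean w x j)
          = ∑ i, (w i * x i j - w i * wMean w x j) :=
            Finset.sum_congr rfl fun i _ => by ring
        _ = (∑ i, w i * x i j) - ∑ i, w i * wMean w x j := Finset.sum_sub_distrib _ _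
        _ = (∑ i, w i * x i j) - s * wMean w x j := by
            rw [← Finset.sum_mul, ← hs_def]
    rw [h1]
    have h2 : wMean w x j = s⁻¹ * ∑ i, w i * x i j := by
      simp only [wMean, hs_def]
    rw [h2]
    have hsne : s ≠ 0 := ne_of_gt hs_pos
    rw [← mul_assoc, mul_inv_cancel₀ hsne, one_mul, sub_self]
  have hvBeq : (fun j => ∑ i ∈ Gᶜ, w i * (x i j - wMean w x j))
      = fun j => sG * Δv j - u j := by
    funext j
    have h1 : ∑ i ∈ G, w i * (x i j - wMean w x j)
        + ∑ i ∈ Gᶜ, w i * (x i j - wMean w x j) = 0 := by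
      rw [hsplitGB (fun i => w i * (x i j - wMean w x j))]
      exact hz0 j
    have h2 : ∑ i ∈ G, w i * (x i j - wMean w x j) = u j - sG * Δv j := by
      have h3 : ∀ i ∈ G, w i * (x i j - wMean w x j)
          = w i * (y i j - μ j) - w i * Δv j := by
        intro i hi
        rw [hGy i hi]
        simp only [hΔv_def]
        ring
      rw [Finset.sum_congr rfl h3, Finset.sum_sub_distrib, ← Finset.sum_mul, ← hsG_def]
    linarith only [h1, h2]
  have hvB2 : innerM Pstar (outer (fun j => ∑ i ∈ Gᶜ, w i * (x i j - wMean w x j))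
        (fun j => ∑ i ∈ Gᶜ, w i * (x i j - wMean w x j)))
      = sG^2 * q2 - sG * Xu + innerM Pstar (outer u u) := by
    rw [hvBeq, ip_expand_smul_sub Pstar sG Δv u, ← hq2_def, hXu_def]
    ring
  have hvBle : innerM Pstar (outer (fun j => ∑ i ∈ Gᶜ, w i * (x i j - wMean w x j))
        (fun j => ∑ i ∈ Gᶜ, w i * (x i j - wMean w x j))) ≤ sB * btot := by
    have hL := innerM_outer_sum_left Pstar Gᶜ w (fun i => fun j => x i j - wMean w x j)
      (fun j => ∑ i ∈ Gᶜ, w i * (x i j - wMean w x j))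
    have hR := innerM_outer_sum_right Pstar Gᶜ w (fun i => fun j => x i j - wMean w x j)
      (fun j => ∑ i ∈ Gᶜ, w i * (x i j - wMean w x j))
    have hper : ∀ i ∈ Gᶜ, 0 ≤ sB^2 * τ i
        - sB * innerM Pstar (outer (fun j => x i j - wMean w x j)
            (fun j => ∑ i' ∈ Gᶜ, w i' * (x i' j - wMean w x j)))
        - sB * innerM Pstar (outer (fun j => ∑ i' ∈ Gᶜ, w i' * (x i' j - wMean w x j))
            (fun j => x i j - wMean w x j))
        + innerM Pstar (outer (fun j => ∑ i ∈ Gᶜ, w i * (x i j - wMean w x j))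
            (fun j => ∑ i ∈ Gᶜ, w i * (x i j - wMean w x j))) := by
      intro i _
      have h0 := hAdq.1 (fun j => sB * (x i j - wMean w x j)
        - ∑ i' ∈ Gᶜ, w i' * (x i' j - wMean w x j)) Pstar hPmem
      rw [ip_expand_smul_sub Pstar sB (fun j => x i j - wMean w x j)
        (fun j => ∑ i' ∈ Gᶜ, w i' * (x i' j - wMean w x j))] at h0
      rw [hτ i]
      linarith only [h0]
    have hsum0 := Finset.sum_nonneg fun i hi => mul_nonneg (hw0 i) (hper i hi)
    have hexp : ∑ i ∈ Gᶜ, w i * (sB^2 * τ i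
        - sB * innerM Pstar (outer (fun j => x i j - wMean w x j)
            (fun j => ∑ i' ∈ Gᶜ, w i' * (x i' j - wMean w x j)))
        - sB * innerM Pstar (outer (fun j => ∑ i' ∈ Gᶜ, w i' * (x i' j - wMean w x j))
            (fun j => x i j - wMean w x j))
        + innerM Pstar (outer (fun j => ∑ i ∈ Gᶜ, w i * (x i j - wMean w x j))
            (fun j => ∑ i ∈ Gᶜ, w i * (x i j - wMean w x j))))
        = sB^2 * btot
          - sB * (∑ i ∈ Gᶜ, w i * innerM Pstar (outer (fun j => x i j - wMean w x j)
              (fun j => ∑ i' ∈ Gᶜ, w i' * (x i' j - wMean w x j))))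
          - sB * (∑ i ∈ Gᶜ, w i * innerM Pstar
              (outer (fun j => ∑ i' ∈ Gᶜ, w i' * (x i' j - wMean w x j))
                (fun j => x i j - wMean w x j)))
          + sB * innerM Pstar (outer (fun j => ∑ i ∈ Gᶜ, w i * (x i j - wMean w x j))
              (fun j => ∑ i ∈ Gᶜ, w i * (x i j - wMean w x j))) := by
      calc ∑ i ∈ Gᶜ, w i * (sB^2 * τ i
            - sB * innerM Pstar (outer (fun j => x i j - wMean w x j)
                (fun j => ∑ i' ∈ Gᶜ, w i' * (x i' j - wMean w x j)))
            - sB * innerM Pstar (outer (fun j => ∑ i' ∈ Gᶜ, w i' * (x i' j - wMean w x j))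
                (fun j => x i j - wMean w x j))
            + innerM Pstar (outer (fun j => ∑ i ∈ Gᶜ, w i * (x i j - wMean w x j))
                (fun j => ∑ i ∈ Gᶜ, w i * (x i j - wMean w x j))))
          = ∑ i ∈ Gᶜ, (sB^2 * (w i * τ i)
            - sB * (w i * innerM Pstar (outer (fun j => x i j - wMean w x j)
                (fun j => ∑ i' ∈ Gᶜ, w i' * (x i' j - wMean w x j))))
            - sB * (w i * innerM Pstar
                (outer (fun j => ∑ i' ∈ Gᶜ, w i' * (x i' j - wMean w x j))
                  (fun j => x i j - wMean w x j)))
            + w i * innerM Pstar (outer (fun j => ∑ i ∈ Gᶜ, w i * (x i j - wMean w x j))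
                (fun j => ∑ i ∈ Gᶜ, w i * (x i j - wMean w x j)))) :=
            Finset.sum_congr rfl fun i _ => by ring
        _ = _ := by
            rw [Finset.sum_add_distrib, Finset.sum_sub_distrib, Finset.sum_sub_distrib,
              ← Finset.mul_sum, ← Finset.mul_sum, ← Finset.mul_sum, ← Finset.sum_mul,
              ← hbtot_def]
    rw [hexp] at hsum0
    rw [← hL, ← hR] at hsum0
    -- hsum0 : 0 ≤ sB^2*btot - sB*ipvv - sB*ipvv + sB*ipvv
    rcases eq_or_lt_of_le hsB0 with h0 | hsBpos
    · have hw00 : ∀ i ∈ Gᶜ, w i = 0 := by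
        intro i hi
        have h1 := (Finset.sum_eq_zero_iff_of_nonneg (fun i _ => hw0 i)).1
          (by rw [← hsB_def]; exact h0.symm)
        exact h1 i hi
      have hzero : (fun j => ∑ i ∈ Gᶜ, w i * (x i j - wMean w x j))
          = fun j => (0:ℝ) := by
        funext j
        exact Finset.sum_eq_zero fun i hi => by rw [hw00 i hi]; ring
      rw [hzero]
      have : innerM Pstar (outer (fun _ : Fin m => (0:ℝ)) (fun _ : Fin m => (0:ℝ))) = 0 := by
        simp [innerM, outer]
      rw [this]
      have := mul_nonneg hsB0 hbtot0
      linarith only [this]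
    · have h2 : 0 ≤ sB * (sB*btot - innerM Pstar
          (outer (fun j => ∑ i ∈ Gᶜ, w i * (x i j - wMean w x j))
            (fun j => ∑ i ∈ Gᶜ, w i * (x i j - wMean w x j)))) := by
        linarith only [hsum0]
      have h3 := (mul_nonneg_iff_of_pos_left hsBpos).1 h2
      linarith only [h3]
  -- freeze the scalar quantities
  clear_value s sG sB tG q2 AG gtot btot goodin badin Qh Δ2 Φ φr τ0
  -- f-mass bounds
  have hAG : |AG - sG*Qh| ≤ 3*Δ2 := by
    have hAGsplit : AG = (1/(n:ℝ)) * (∑ i ∈ G, f i)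
        - ∑ i ∈ G, (1/(n:ℝ) - w i) * f i := by
      rw [hAG_def, Finset.mul_sum, ← Finset.sum_sub_distrib]
      exact Finset.sum_congr rfl fun i _ => by ring
    have h1 := hfM G hGcond
    have h2 := habs_wb G (fun i => 1/(n:ℝ) - w i) k1 (fun i => f i - Qh) ((n:ℝ)*Δ2)
      (le_refl G) hcG0 hcG1 hcGsum (fun M hMG hMc => hfM M (hMcond1 M hMG hMc))
    have h4 : 2*((n:ℝ)*Δ2)/n = 2*Δ2 := by field_simp
    rw [h4] at h2
    have e1 : ∑ i ∈ G, (f i - Qh) = ∑ i ∈ G, f i - G.card * Qh := by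
      rw [Finset.sum_sub_distrib, Finset.sum_const, nsmul_eq_mul]
    have e2 : ∑ i ∈ G, (1/(n:ℝ) - w i)*(f i - Qh)
        = ∑ i ∈ G, (1/(n:ℝ) - w i)*f i - (∑ i ∈ G, (1/(n:ℝ) - w i))*Qh := by
      rw [Finset.sum_mul, ← Finset.sum_sub_distrib]
      exact Finset.sum_congr rfl fun i _ => by ring
    have e3 : ∑ i ∈ G, (1/(n:ℝ) - w i) = (G.card:ℝ)*(1/(n:ℝ)) - sG := by
      rw [Finset.sum_sub_distrib, Finset.sum_const, nsmul_eq_mul, hsG_def]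
    have hrel : AG - sG*Qh = (1/(n:ℝ))*(∑ i ∈ G, (f i - Qh))
        - ∑ i ∈ G, (1/(n:ℝ) - w i)*(f i - Qh) := by
      rw [hAGsplit, e1, e2, e3]
      ring
    have h3 : |(1/(n:ℝ))*(∑ i ∈ G, (f i - Qh))| ≤ Δ2 := by
      rw [abs_mul, abs_of_pos h1npos]
      calc (1/(n:ℝ)) * |∑ i ∈ G, (f i - Qh)|
          ≤ (1/(n:ℝ)) * ((n:ℝ)*Δ2) := mul_le_mul_of_nonneg_left h1 (le_of_lt h1npos)
        _ = Δ2 := by field_simp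
    have h5 := abs_le.1 h3
    have h6 := abs_le.1 h2
    rw [hrel, abs_le]
    constructor <;> linarith only [h5.1, h5.2, h6.1, h6.2]
  have hAGl := abs_le.1 hAG
  have hFi : ∑ i ∈ TopG, w i * f i ≤ 2*Δ2 + 3*ε*r^2 := by
    have h2 := habs_wb TopG w k3 (fun i => f i - Qh) ((n:ℝ)*Δ2)
      (by rw [hTopG_def]; exact Finset.filter_subset _ _)
      (fun i _ => hw0 i) (fun i _ => hw1 i)
      (by rw [← htG_def]; exact htGk)
      (fun M hMG hMc => hfM M (hMcond3 M hMG hMc))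
    have h4 : 2*((n:ℝ)*Δ2)/n = 2*Δ2 := by field_simp
    rw [h4] at h2
    have hexp : ∑ i ∈ TopG, w i * f i = ∑ i ∈ TopG, w i * (f i - Qh) + tG*Qh := by
      rw [htG_def, Finset.sum_mul, ← Finset.sum_add_distrib]
      exact Finset.sum_congr rfl fun i _ => by ring
    have h5 : tG*Qh ≤ 3*ε*r^2 := by
      have e1 : tG*Qh ≤ tG*r^2 := mul_le_mul_of_nonneg_left (abs_le.1 hQhat).2 htG0
      have e2 : tG*r^2 ≤ (3*ε)*r^2 := mul_le_mul_of_nonneg_right htG3 (by positivity)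
      linarith only [e1, e2]
    have h6 := (abs_le.1 h2).2
    linarith only [hexp, h5, h6]
  -- scale comparisons
  have hΦ0 : 0 ≤ Φ := le_of_lt hΦpos
  have hεr2nn : (0:ℝ) ≤ ε*r^2 := by positivity
  have hδ2εpos : 0 < δ^2/ε := by positivity
  have hA' : 100000000*(δ^2/ε) < Φ := by linarith only [hφ, hεr2nn]
  have hB' : 100000000*(ε*r^2) < Φ := by linarith only [hφ, hδ2εpos]
  have hεΦ : 100000000*ε < Φ := by
    have h2 : ε*ε < δ*δ := mul_lt_mul'' hεδ hεδ (le_of_lt hε) (le_of_lt hε)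
    have h3 : ε < δ^2/ε := by
      rw [lt_div_iff₀ hε]
      nlinarith only [h2]
    linarith only [hA', h3]
  have hδ2Φ : 100000000*δ^2 < ε*Φ := by
    have hA2 := hA'
    have h1 : 100000000*(δ^2/ε) = (100000000*δ^2)/ε := by ring
    rw [h1, div_lt_iff₀ hε] at hA2
    linarith only [hA2]
  have hρ0 : 0 ≤ ε ^ ((3:ℝ)/4) * Φ ^ ((1:ℝ)/4) :=
    mul_nonneg (Real.rpow_nonneg (le_of_lt hε) _) (Real.rpow_nonneg hΦ0 _)
  have hρ2 : (ε ^ ((3:ℝ)/4) * Φ ^ ((1:ℝ)/4))^2 ≤ ε*Φ/10000 := by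
    have h1 : (ε ^ ((3:ℝ)/4))^(4:ℕ) = ε^(3:ℕ) := by
      rw [← Real.rpow_natCast (ε ^ ((3:ℝ)/4)) 4, ← Real.rpow_mul (le_of_lt hε),
        ← Real.rpow_natCast ε 3]
      norm_num
    have h2 : (Φ ^ ((1:ℝ)/4))^(4:ℕ) = Φ^(1:ℕ) := by
      rw [← Real.rpow_natCast (Φ ^ ((1:ℝ)/4)) 4, ← Real.rpow_mul hΦ0,
        ← Real.rpow_natCast Φ 1]
      norm_num
    have h4 : (ε ^ ((3:ℝ)/4) * Φ ^ ((1:ℝ)/4))^(4:ℕ) = ε^3 * Φ := by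
      rw [mul_pow, h1, h2, pow_one]
    have h6 : 0 < ε*ε*Φ*(Φ - 100000000*ε) :=
      mul_pos (mul_pos (mul_pos hε hε) hΦpos) (by linarith only [hεΦ])
    have h7 : 0 < ε*Φ/10000 := div_pos (mul_pos hε hΦpos) (by norm_num)
    have h8 : ε^3*Φ ≤ (ε*Φ/10000)^2 := by nlinarith only [h6]
    have h9 : ((ε ^ ((3:ℝ)/4) * Φ ^ ((1:ℝ)/4))^2)^2 = ε^3*Φ := by
      rw [← h4]
      ring
    have h10 : ((ε ^ ((3:ℝ)/4) * Φ ^ ((1:ℝ)/4))^2)^2 ≤ (ε*Φ/10000)^2 := by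
      rw [h9]
      exact h8
    exact (pow_le_pow_iff_left₀ (sq_nonneg _) (le_of_lt h7) (by norm_num)).1 h10
  have hδ'sq : δ'^2 ≤ (3/1000000)*(δ^2 + (ε ^ ((3:ℝ)/4) * Φ ^ ((1:ℝ)/4))^2 + (ε*r)^2) := by
    have hrhs0 : 0 ≤ (1/1000)*(δ + ε ^ ((3:ℝ)/4) * Φ ^ ((1:ℝ)/4) + ε*r) := by
      have : 0 ≤ ε*r := by positivity
      have hδ0 : (0:ℝ) ≤ δ := le_of_lt hδpos
      linarith only [hρ0, this, hδ0]
    have h1 : δ'^2 ≤ ((1/1000)*(δ + ε ^ ((3:ℝ)/4) * Φ ^ ((1:ℝ)/4) + ε*r))^2 :=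
      sq_le_sq' (by linarith only [hδ'0, hrhs0, hδ'c]) hδ'c
    have h2 : ((1/1000)*(δ + ε ^ ((3:ℝ)/4) * Φ ^ ((1:ℝ)/4) + ε*r))^2
        ≤ (3/1000000)*(δ^2 + (ε ^ ((3:ℝ)/4) * Φ ^ ((1:ℝ)/4))^2 + (ε*r)^2) := by
      linarith only [sq_nonneg (δ - ε ^ ((3:ℝ)/4) * Φ ^ ((1:ℝ)/4)),
        sq_nonneg (δ - ε*r), sq_nonneg (ε ^ ((3:ℝ)/4) * Φ ^ ((1:ℝ)/4) - ε*r)]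
    linarith only [h1, h2]
  have hε2r2 : ε^2*r^2 ≤ ε*Φ/100000000 := by
    have h1 : ε*r^2 ≤ Φ/100000000 := by linarith only [hB']
    have h2 := mul_le_mul_of_nonneg_left h1 (le_of_lt hε)
    linarith only [h2]
  have hδ'2 : δ'^2 ≤ ε*Φ/1000000000 := by
    linarith only [hδ'sq, hρ2, hδ2Φ, hε2r2, mul_pos hε hΦpos]
  have hΔ2Φ : Δ2 ≤ Φ/10000000000 := by
    rw [hΔ2_def, div_le_div_iff₀ (by linarith only [hε] : (0:ℝ) < 10*ε) (by norm_num)]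
    linarith only [hδ'2]
  have hεΦ2 : ε*Φ ≤ 0.01*Φ := mul_le_mul_of_nonneg_right (le_of_lt hε01) hΦ0
  have hδ'2Φ : δ'^2 ≤ Φ/100000000000 := by linarith only [hδ'2, hεΦ2]
  have hεr2Φ : ε*r^2 ≤ Φ/100000000 := by linarith only [hB']
  -- sign of φr and the main mass estimates
  have hsBQh_le : sB*Qh ≤ ε*r^2 := by
    have h2 : sB*Qh ≤ sB*r^2 := mul_le_mul_of_nonneg_left (abs_le.1 hQhat).2 hsB0
    have h3 : sB*r^2 ≤ ε*r^2 := mul_le_mul_of_nonneg_right hsBε (by positivity)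
    linarith only [h2, h3]
  have hsBQh_ge : -(ε*r^2) ≤ sB*Qh := by
    have h2 : sB*(-(r^2)) ≤ sB*Qh := mul_le_mul_of_nonneg_left (abs_le.1 hQhat).1 hsB0
    have h3 : sB*r^2 ≤ ε*r^2 := mul_le_mul_of_nonneg_right hsBε (by positivity)
    linarith only [h2, h3]
  have hQhsplit : s*Qh - sG*Qh = sB*Qh := by
    rw [← hsGsB]
    ring
  have hsGq2ge : 0.97*q2 ≤ sG*q2 := mul_le_mul_of_nonneg_right hsG97 hq2nn
  have hsGq2le : sG*q2 ≤ q2 := by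
    have h := mul_le_mul_of_nonneg_right hsG1 hq2nn
    linarith only [h]
  have hφneg : φr < 0 := by
    rcases lt_trichotomy φr 0 with h | h | h
    · exact h
    · exfalso
      have hz : Φ = 0 := by rw [hΦ_def, h, abs_zero]
      linarith only [hz, hΦpos]
    · exfalso
      have hΦeq : Φ = φr := by rw [hΦ_def, abs_of_pos h]
      have hsφ : 0.98*φr ≤ s*φr :=
        mul_le_mul_of_nonneg_right (by linarith only [hs_ge, hε01]) (le_of_lt h)
      linarith only [hbtot0, htot, hEG, hAGl.1, hQhsplit, hsBQh_le, hXu_le,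
        hsGq2ge, hsφ, hΦeq, hΔ2Φ, hδ'2Φ, hεr2Φ, hΦpos, hq2nn]
  have hΦeq : φr = -Φ := by
    rw [hΦ_def, abs_of_neg hφneg]
    ring
  have hsΦle : s*Φ ≤ Φ := by
    have h := mul_le_mul_of_nonneg_right hs_le hΦ0
    linarith only [h]
  have hsΦge : 0.98*Φ ≤ s*Φ :=
    mul_le_mul_of_nonneg_right (by linarith only [hs_ge, hε01]) hΦ0
  have hsφr : s*φr = -(s*Φ) := by rw [hΦeq]; ring
  have hbup : btot ≤ 1.001*Φ - 0.6*q2 := by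
    linarith only [htot, hEG, hsφr, hAGl.1, hQhsplit, hsBQh_le, hXu_le, hsGq2ge,
      hsΦle, hΔ2Φ, hδ'2Φ, hεr2Φ, hq2nn, hΦ0]
  have hbup2 : btot ≤ 1.001*Φ := by linarith only [hbup, hq2nn]
  have hεbt : sB*btot ≤ 0.011*Φ := by
    have h1 : sB*btot ≤ ε*btot := mul_le_mul_of_nonneg_right hsBε hbtot0
    have h2 : ε*btot ≤ ε*(1.001*Φ) := mul_le_mul_of_nonneg_left hbup2 (le_of_lt hε)
    have h3 : ε*(1.001*Φ) ≤ 0.01*(1.001*Φ) :=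
      mul_le_mul_of_nonneg_right (le_of_lt hε01) (by positivity)
    linarith only [h1, h2, h3, hΦ0]
  have hsG2q2 : 0.9409*q2 ≤ sG^2*q2 := by
    have h1 : (0.97:ℝ)*0.97 ≤ sG*sG :=
      mul_le_mul hsG97 hsG97 (by norm_num) (by linarith only [hsG97])
    have h2 := mul_le_mul_of_nonneg_right h1 hq2nn
    linarith only [h2]
  have hq2Φ : q2 ≤ 0.018*Φ := by
    have hsGXu : sG*Xu ≤ 30*δ'^2 + 0.3*q2 := by
      have h1 : sG*Xu ≤ sG*(30*δ'^2 + 0.3*q2) := mul_le_mul_of_nonneg_left hXu_le hsG0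
      have h2 : sG*(30*δ'^2 + 0.3*q2) ≤ 1*(30*δ'^2 + 0.3*q2) :=
        mul_le_mul_of_nonneg_right hsG1 (by positivity)
      linarith only [h1, h2]
    linarith only [hvB2, hvBle, hεbt, hsG2q2, hsGXu, hipu0, hδ'2Φ, hΦ0]
  have hblow : 0.95*Φ ≤ btot := by
    linarith only [htot, hEG, hsφr, hAGl.2, hQhsplit, hsBQh_ge, hXu_ge, hsGq2le,
      hsΦge, hΔ2Φ, hδ'2Φ, hεr2Φ, hq2Φ, hΦpos, hq2nn]
  have hgood_up : goodin ≤ 0.006*Φ := by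
    have htGq2 : tG*q2 ≤ 3*ε*q2 := mul_le_mul_of_nonneg_right htG3 hq2nn
    have hεq2 : 3*ε*q2 ≤ 0.03*q2 := by
      have h := mul_le_mul_of_nonneg_right (le_of_lt hε01) hq2nn
      linarith only [h]
    linarith only [hET, hFi, hXm_ge, htGq2, hεq2, hq2Φ, hΔ2Φ, hδ'2Φ, hεr2Φ, hq2nn]
  -- top-N bookkeeping
  set θ : ℝ := τ Nf with hθ_def
  have hθ0 : 0 ≤ θ := hτnn Nf
  have hτin : ∀ i ∈ Finset.univ.filter (fun i : Fin n => (i:ℕ) < N), θ ≤ τ i := by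
    intro i hi
    rw [Finset.mem_filter] at hi
    exact hsort i Nf (by rw [Fin.le_def]; simp only [hNf_def]; omega)
  have hτout : ∀ i ∈ Gᶜ.filter (fun i : Fin n => ¬((i:ℕ) < N)), τ i ≤ θ := by
    intro i hi
    rw [Finset.mem_filter] at hi
    exact hsort Nf i (by rw [Fin.le_def]; simp only [hNf_def]; omega)
  clear_value θ
  have hTwθ : 2*ε*θ ≤ ∑ i ∈ Finset.univ.filter (fun i : Fin n => (i:ℕ) < N), w i * τ i := by
    calc 2*ε*θ ≤ (∑ i ∈ Finset.univ.filter (fun i : Fin n => (i:ℕ) < N), w i) * θ :=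
          mul_le_mul_of_nonneg_right (le_of_lt hNsum) hθ0
      _ = ∑ i ∈ Finset.univ.filter (fun i : Fin n => (i:ℕ) < N), w i * θ := by
          rw [Finset.sum_mul]
      _ ≤ ∑ i ∈ Finset.univ.filter (fun i : Fin n => (i:ℕ) < N), w i * τ i :=
          Finset.sum_le_sum fun i hi => mul_le_mul_of_nonneg_left (hτin i hi) (hw0 i)
  have hbout : btot - badin ≤ ε*θ := by
    have h1 : btot = badin + ∑ i ∈ Gᶜ.filter (fun i : Fin n => ¬((i:ℕ) < N)), w i * τ i := by
      rw [hbtot_def, hbadin_def, hTopB_def]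
      exact (Finset.sum_filter_add_sum_filter_not Gᶜ (fun i : Fin n => (i:ℕ) < N)
        (fun i => w i * τ i)).symm
    have h2 : ∑ i ∈ Gᶜ.filter (fun i : Fin n => ¬((i:ℕ) < N)), w i * τ i
        ≤ ∑ i ∈ Gᶜ.filter (fun i : Fin n => ¬((i:ℕ) < N)), w i * θ :=
      Finset.sum_le_sum fun i hi => mul_le_mul_of_nonneg_left (hτout i hi) (hw0 i)
    have h3 : ∑ i ∈ Gᶜ.filter (fun i : Fin n => ¬((i:ℕ) < N)), w i * θ
        = (∑ i ∈ Gᶜ.filter (fun i : Fin n => ¬((i:ℕ) < N)), w i) * θ := by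
      rw [Finset.sum_mul]
    have h4 : ∑ i ∈ Gᶜ.filter (fun i : Fin n => ¬((i:ℕ) < N)), w i ≤ sB := by
      rw [hsB_def]
      exact Finset.sum_le_sum_of_subset_of_nonneg (Finset.filter_subset _ _)
        fun i _ _ => hw0 i
    have h5 : (∑ i ∈ Gᶜ.filter (fun i : Fin n => ¬((i:ℕ) < N)), w i) * θ ≤ ε*θ :=
      mul_le_mul_of_nonneg_right (le_trans h4 hsBε) hθ0
    linarith only [h1, h2, h3, h5]
  have hsplitTop : ∑ i ∈ Finset.univ.filter (fun i : Fin n => (i:ℕ) < N), w i * τ i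
      = goodin + badin := by
    rw [hgoodin_def, hbadin_def, hTopG_def, hTopB_def, Finset.sum_filter,
      Finset.sum_filter, Finset.sum_filter]
    exact (hsplitGB (fun i => if (i:ℕ) < N then w i * τ i else 0)).symm
  have hkey : goodin ≤ badin := by
    linarith only [hbout, hTwθ, hsplitTop, hblow, hgood_up, hΦpos, hbadin0, hgoodin0]
  -- rewrite the conclusion
  have hτdiv : ∀ i : Fin n,
      1/(n:ℝ) - (if (i:ℕ) < N then (1 - τ i / τ0) * w i else w i)
        = (1/(n:ℝ) - w i) + (if (i:ℕ) < N then (w i * τ i)/τ0 else 0) := by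
    intro i
    by_cases hi : (i:ℕ) < N
    · simp only [hi, if_true]
      ring
    · simp only [hi, if_false]
      ring
  have hGsum : ∑ i ∈ G, (1/(n:ℝ) - (if (i:ℕ) < N then (1 - τ i / τ0) * w i else w i))
      = ∑ i ∈ G, (1/(n:ℝ) - w i) + goodin/τ0 := by
    rw [Finset.sum_congr rfl (fun i _ => hτdiv i), Finset.sum_add_distrib]
    congr 1
    rw [← Finset.sum_filter, ← hTopG_def, hgoodin_def, Finset.sum_div]
  have hBsum : ∑ i ∈ Gᶜ, (1/(n:ℝ) - (if (i:ℕ) < N then (1 - τ i / τ0) * w i else w i))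
      = ∑ i ∈ Gᶜ, (1/(n:ℝ) - w i) + badin/τ0 := by
    rw [Finset.sum_congr rfl (fun i _ => hτdiv i), Finset.sum_add_distrib]
    congr 1
    rw [← Finset.sum_filter, ← hTopB_def, hbadin_def, Finset.sum_div]
  rw [hGsum, hBsum]
  have hdivle : goodin/τ0 ≤ badin/τ0 := by
    have h1 : goodin * τ0⁻¹ ≤ badin * τ0⁻¹ :=
      mul_le_mul_of_nonneg_right hkey (by positivity)
    simpa [div_eq_mul_inv] using h1
  linarith only [hInv, hdivle]




end Paper
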